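/- Inequality from the proof of the deterministic-BC region (Appendix C). Let (W,V,Y₁,Y₂) be random variables taking values in finite sets. Then I(V;Y₂|W) − I(V;Y₁|W) ≤ H(Y₂|Y₁). -/

import Mathlib

open scoped Classical BigOperators

noncomputable section

/-- Entropy (base 2) of a finitely supported distribution given as a function. -/
def entFun {α : Type} [Fintype α] (q : α → ℝ) : ℝ :=
  -∑ a, q a * Real.logb 2 (q a)

/-- Distribution (pushforward) of the random variable `A` under the pmf `p`. -/
def distOf {Ω α : Type} [Fintype Ω] [Fintype α] (p : Ω → ℝ) (A : Ω → α) : α → ℝ :=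
  fun a => ∑ ω, if A ω = a then p ω else 0

/-- Shannon entropy `H(A)` (base 2). -/
def Hent {Ω α : Type} [Fintype Ω] [Fintype α] (p : Ω → ℝ) (A : Ω → α) : ℝ :=
  entFun (distOf p A)

/-- Conditional entropy `H(A|B)`. -/
def CHent {Ω α β : Type} [Fintype Ω] [Fintype α] [Fintype β]
    (p : Ω → ℝ) (A : Ω → α) (B : Ω → β) : ℝ :=
  Hent p (fun ω => (A ω, B ω)) - Hent p B

/-- Mutual information `I(A;B)`. -/
def MI {Ω α β : Type} [Fintype Ω] [Fintype α] [Fintype β]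
    (p : Ω → ℝ) (A : Ω → α) (B : Ω → β) : ℝ :=
  Hent p A + Hent p B - Hent p (fun ω => (A ω, B ω))

/-- Conditional mutual information `I(A;B|C)`. -/
def CMI {Ω α β γ : Type} [Fintype Ω] [Fintype α] [Fintype β] [Fintype γ]
    (p : Ω → ℝ) (A : Ω → α) (B : Ω → β) (C : Ω → γ) : ℝ :=
  Hent p (fun ω => (A ω, C ω)) + Hent p (fun ω => (B ω, C ω))
    - Hent p (fun ω => (A ω, B ω, C ω)) - Hent p C

/-- `p` is a probability mass function on the finite type `α`. -/
def IsPMF {α : Type} [Fintype α] (p : α → ℝ) : Prop :=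
  (∀ a, 0 ≤ p a) ∧ ∑ a, p a = 1

/-! ### Auxiliary lemmas -/

lemma swap3 {α β γ : Type} [Fintype α] [Fintype β] [Fintype γ] (f : α → β → γ → ℝ) :
    ∑ a, ∑ b, ∑ c, f a b c = ∑ c, ∑ a, ∑ b, f a b c := by
  have h1 : ∀ a, ∑ b, ∑ c, f a b c = ∑ c, ∑ b, f a b c := fun a => Finset.sum_comm
  simp_rw [h1]
  exact Finset.sum_comm

lemma entFun_mul_log2 {α : Type} [Fintype α] (q : α → ℝ) :
    entFun q * Real.log 2 = -∑ a, q a * Real.log (q a) := by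
  have h2 : Real.log 2 ≠ 0 := ne_of_gt (Real.log_pos one_lt_two)
  rw [entFun, neg_mul, Finset.sum_mul, neg_inj]
  refine Finset.sum_congr rfl fun a _ => ?_
  rw [Real.logb, mul_assoc, div_mul_cancel₀ _ h2]

/-- Strong subadditivity at the level of `entFun`. -/
lemma entFun_key {α β γ : Type} [Fintype α] [Fintype β] [Fintype γ]
    (r : α → β → γ → ℝ) (hr : ∀ a b c, 0 ≤ r a b c)
    (hs : ∑ a, ∑ b, ∑ c, r a b c = 1) :
    0 ≤ entFun (fun ac : α × γ => ∑ b, r ac.1 b ac.2)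
      + entFun (fun bc : β × γ => ∑ a, r a bc.1 bc.2)
      - entFun (fun x : α × β × γ => r x.1 x.2.1 x.2.2)
      - entFun (fun c => ∑ a, ∑ b, r a b c) := by
  have hlog2 : (0:ℝ) < Real.log 2 := Real.log_pos one_lt_two
  set rAC : α → γ → ℝ := fun a c => ∑ b, r a b c with hrAC
  set rBC : β → γ → ℝ := fun b c => ∑ a, r a b c with hrBC
  set rC : γ → ℝ := fun c => ∑ a, ∑ b, r a b c with hrC
  have hAC0 : ∀ a c, 0 ≤ rAC a c := fun a c => Finset.sum_nonneg fun b _ => hr a b c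
  have hBC0 : ∀ b c, 0 ≤ rBC b c := fun b c => Finset.sum_nonneg fun a _ => hr a b c
  have hC0 : ∀ c, 0 ≤ rC c := fun c => Finset.sum_nonneg fun a _ => hAC0 a c
  have hACC : ∀ a c, rAC a c ≤ rC c := fun a c =>
    Finset.single_le_sum (fun a _ => hAC0 a c) (Finset.mem_univ a)
  have hterm : ∀ a b c,
      r a b c * (Real.log (rAC a c) + Real.log (rBC b c)
        - Real.log (r a b c) - Real.log (rC c))
      ≤ rAC a c * rBC b c / rC c - r a b c := by
    intro a b c
    rcases eq_or_lt_of_le (hr a b c) with h0 | hpos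
    · rw [← h0]
      simp only [zero_mul, sub_zero]
      exact div_nonneg (mul_nonneg (hAC0 a c) (hBC0 b c)) (hC0 c)
    · have hAC : 0 < rAC a c :=
        lt_of_lt_of_le hpos (Finset.single_le_sum (fun b _ => hr a b c) (Finset.mem_univ b))
      have hBC : 0 < rBC b c :=
        lt_of_lt_of_le hpos (Finset.single_le_sum (fun a _ => hr a b c) (Finset.mem_univ a))
      have hC : 0 < rC c := lt_of_lt_of_le hAC (hACC a c)
      set Q := rAC a c * rBC b c / (r a b c * rC c) with hQ
      have hQpos : 0 < Q := by positivity
      have hlogQ : Real.log Q = Real.log (rAC a c) + Real.log (rBC b c)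
          - Real.log (r a b c) - Real.log (rC c) := by
        rw [hQ, Real.log_div (by positivity) (by positivity),
          Real.log_mul (ne_of_gt hAC) (ne_of_gt hBC),
          Real.log_mul (ne_of_gt hpos) (ne_of_gt hC)]
        ring
      have hb := Real.log_le_sub_one_of_pos hQpos
      have h1 : r a b c * Real.log Q ≤ r a b c * (Q - 1) :=
        mul_le_mul_of_nonneg_left hb (le_of_lt hpos)
      have h2 : r a b c * Q = rAC a c * rBC b c / rC c := by
        rw [hQ]; field_simp
      have h3 : r a b c * (Q - 1) = rAC a c * rBC b c / rC c - r a b c := by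
        rw [mul_sub, h2, mul_one]
      calc r a b c * (Real.log (rAC a c) + Real.log (rBC b c)
            - Real.log (r a b c) - Real.log (rC c))
          = r a b c * Real.log Q := by rw [hlogQ]
        _ ≤ r a b c * (Q - 1) := h1
        _ = rAC a c * rBC b c / rC c - r a b c := h3
  have hqsum : ∑ c, ∑ a, ∑ b, rAC a c * rBC b c / rC c = 1 := by
    have hper : ∀ c, ∑ a, ∑ b, rAC a c * rBC b c / rC c = rC c := by
      intro c
      have : ∑ a, ∑ b, rAC a c * rBC b c / rC c
          = (∑ a, rAC a c) * (∑ b, rBC b c) / rC c := by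
        rw [Finset.sum_mul_sum]
        rw [Finset.sum_div]
        refine Finset.sum_congr rfl fun a _ => ?_
        rw [Finset.sum_div]
      rw [this]
      have hA : ∑ a, rAC a c = rC c := rfl
      have hB : ∑ b, rBC b c = rC c := by
        rw [hrBC, hrC]
        exact Finset.sum_comm
      rw [hA, hB]
      rcases eq_or_lt_of_le (hC0 c) with h0 | hpos
      · rw [← h0]; simp
      · field_simp
    simp_rw [hper]
    rw [← swap3 r] at *
    exact hs ▸ rfl
  have hT : ∑ a, ∑ b, ∑ c, r a b c * (Real.log (rAC a c) + Real.log (rBC b c)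
      - Real.log (r a b c) - Real.log (rC c)) ≤ 0 := by
    have h1 : ∑ a, ∑ b, ∑ c, r a b c * (Real.log (rAC a c) + Real.log (rBC b c)
        - Real.log (r a b c) - Real.log (rC c))
        ≤ ∑ a, ∑ b, ∑ c, (rAC a c * rBC b c / rC c - r a b c) := by
      refine Finset.sum_le_sum fun a _ => Finset.sum_le_sum fun b _ =>
        Finset.sum_le_sum fun c _ => hterm a b c
    have h2 : ∑ a, ∑ b, ∑ c, (rAC a c * rBC b c / rC c - r a b c) = 0 := by
      simp only [Finset.sum_sub_distrib]
      rw [hs, swap3 (fun a b c => rAC a c * rBC b c / rC c), hqsum]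
      ring
    linarith
  set X := entFun (fun ac : α × γ => ∑ b, r ac.1 b ac.2)
      + entFun (fun bc : β × γ => ∑ a, r a bc.1 bc.2)
      - entFun (fun x : α × β × γ => r x.1 x.2.1 x.2.2)
      - entFun (fun c => ∑ a, ∑ b, r a b c) with hX
  have hEAC : ∑ x : α × γ, rAC x.1 x.2 * Real.log (rAC x.1 x.2)
      = ∑ a, ∑ b, ∑ c, r a b c * Real.log (rAC a c) := by
    rw [Fintype.sum_prod_type]
    refine Finset.sum_congr rfl fun a _ => ?_
    rw [show (∑ b, ∑ c, r a b c * Real.log (rAC a c))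
        = ∑ c, ∑ b, r a b c * Real.log (rAC a c) from Finset.sum_comm]
    refine Finset.sum_congr rfl fun c _ => ?_
    rw [← Finset.sum_mul]
  have hEBC : ∑ x : β × γ, rBC x.1 x.2 * Real.log (rBC x.1 x.2)
      = ∑ a, ∑ b, ∑ c, r a b c * Real.log (rBC b c) := by
    rw [Fintype.sum_prod_type]
    rw [show (∑ a, ∑ b, ∑ c, r a b c * Real.log (rBC b c))
        = ∑ b, ∑ a, ∑ c, r a b c * Real.log (rBC b c) from Finset.sum_comm]
    refine Finset.sum_congr rfl fun b _ => ?_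
    rw [show (∑ a, ∑ c, r a b c * Real.log (rBC b c))
        = ∑ c, ∑ a, r a b c * Real.log (rBC b c) from Finset.sum_comm]
    refine Finset.sum_congr rfl fun c _ => ?_
    rw [← Finset.sum_mul]
  have hER : ∑ x : α × β × γ, r x.1 x.2.1 x.2.2 * Real.log (r x.1 x.2.1 x.2.2)
      = ∑ a, ∑ b, ∑ c, r a b c * Real.log (r a b c) := by
    rw [Fintype.sum_prod_type]
    refine Finset.sum_congr rfl fun a _ => ?_
    rw [Fintype.sum_prod_type]
  have hEC : ∑ c, rC c * Real.log (rC c)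
      = ∑ a, ∑ b, ∑ c, r a b c * Real.log (rC c) := by
    rw [swap3 (fun a b c => r a b c * Real.log (rC c))]
    refine Finset.sum_congr rfl fun c _ => ?_
    rw [hrC]
    rw [Finset.sum_mul]
    refine Finset.sum_congr rfl fun a _ => ?_
    rw [← Finset.sum_mul]
  have hXlog : X * Real.log 2 = -(∑ a, ∑ b, ∑ c, r a b c * (Real.log (rAC a c)
      + Real.log (rBC b c) - Real.log (r a b c) - Real.log (rC c))) := by
    have e1 := entFun_mul_log2 (fun ac : α × γ => ∑ b, r ac.1 b ac.2)
    have e2 := entFun_mul_log2 (fun bc : β × γ => ∑ a, r a bc.1 bc.2)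
    have e3 := entFun_mul_log2 (fun x : α × β × γ => r x.1 x.2.1 x.2.2)
    have e4 := entFun_mul_log2 (fun c => ∑ a, ∑ b, r a b c)
    simp only [mul_add, mul_sub, Finset.sum_add_distrib, Finset.sum_sub_distrib]
    rw [hX]
    rw [sub_mul, sub_mul, add_mul, e1, e2, e3, e4]
    rw [show (∑ ac : α × γ, (∑ b, r ac.1 b ac.2) * Real.log (∑ b, r ac.1 b ac.2))
        = ∑ x : α × γ, rAC x.1 x.2 * Real.log (rAC x.1 x.2) from rfl, hEAC]
    rw [show (∑ bc : β × γ, (∑ a, r a bc.1 bc.2) * Real.log (∑ a, r a bc.1 bc.2))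
        = ∑ x : β × γ, rBC x.1 x.2 * Real.log (rBC x.1 x.2) from rfl, hEBC]
    rw [hER]
    rw [show (∑ c, (∑ a, ∑ b, r a b c) * Real.log (∑ a, ∑ b, r a b c))
        = ∑ c, rC c * Real.log (rC c) from rfl, hEC]
    ring
  nlinarith [hT, hXlog, hlog2]

lemma distOf_margAC {Ω α β γ : Type} [Fintype Ω] [Fintype α] [Fintype β] [Fintype γ]
    (p : Ω → ℝ) (A : Ω → α) (B : Ω → β) (C : Ω → γ) (a : α) (c : γ) :
    distOf p (fun ω => (A ω, C ω)) (a, c)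
      = ∑ b, distOf p (fun ω => (A ω, B ω, C ω)) (a, b, c) := by
  unfold distOf
  rw [Finset.sum_comm]
  refine Finset.sum_congr rfl fun ω _ => ?_
  by_cases h1 : A ω = a <;> by_cases h2 : C ω = c <;>
    simp [Prod.ext_iff, h1, h2, Finset.sum_ite_eq]

lemma distOf_margBC {Ω α β γ : Type} [Fintype Ω] [Fintype α] [Fintype β] [Fintype γ]
    (p : Ω → ℝ) (A : Ω → α) (B : Ω → β) (C : Ω → γ) (b : β) (c : γ) :
    distOf p (fun ω => (B ω, C ω)) (b, c)
      = ∑ a, distOf p (fun ω => (A ω, B ω, C ω)) (a, b, c) := by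
  unfold distOf
  rw [Finset.sum_comm]
  refine Finset.sum_congr rfl fun ω _ => ?_
  by_cases h1 : B ω = b <;> by_cases h2 : C ω = c <;>
    simp [Prod.ext_iff, h1, h2, Finset.sum_ite_eq]

lemma distOf_margC {Ω α β γ : Type} [Fintype Ω] [Fintype α] [Fintype β] [Fintype γ]
    (p : Ω → ℝ) (A : Ω → α) (B : Ω → β) (C : Ω → γ) (c : γ) :
    distOf p C c = ∑ a, ∑ b, distOf p (fun ω => (A ω, B ω, C ω)) (a, b, c) := by
  unfold distOf
  rw [swap3]
  refine Finset.sum_congr rfl fun ω _ => ?_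
  by_cases h2 : C ω = c <;>
    simp [Prod.ext_iff, h2, ite_and, Finset.sum_ite_eq]

lemma distOf_total {Ω α : Type} [Fintype Ω] [Fintype α] (p : Ω → ℝ) (A : Ω → α) :
    ∑ a, distOf p A a = ∑ ω, p ω := by
  unfold distOf
  rw [Finset.sum_comm]
  refine Finset.sum_congr rfl fun ω _ => ?_
  rw [Finset.sum_ite_eq Finset.univ (A ω) (fun _ => p ω)]
  simp

/-- Conditional mutual information is nonnegative. -/
lemma CMI_nonneg {Ω α β γ : Type} [Fintype Ω] [Fintype α] [Fintype β] [Fintype γ]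
    (p : Ω → ℝ) (hp : IsPMF p) (A : Ω → α) (B : Ω → β) (C : Ω → γ) :
    0 ≤ CMI p A B C := by
  obtain ⟨hp0, hp1⟩ := hp
  have hr : ∀ a b c, 0 ≤ distOf p (fun ω => (A ω, B ω, C ω)) (a, b, c) := by
    intro a b c
    refine Finset.sum_nonneg fun ω _ => ?_
    split
    · exact hp0 ω
    · exact le_refl 0
  have hs : ∑ a, ∑ b, ∑ c, distOf p (fun ω => (A ω, B ω, C ω)) (a, b, c) = 1 := by
    have h2 := distOf_total p (fun ω => (A ω, B ω, C ω))
    rw [hp1] at h2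
    rw [← h2, Fintype.sum_prod_type]
    refine Finset.sum_congr rfl fun a _ => ?_
    rw [Fintype.sum_prod_type]
  have hAC : distOf p (fun ω => (A ω, C ω)) = fun ac : α × γ =>
      ∑ b, distOf p (fun ω => (A ω, B ω, C ω)) (ac.1, b, ac.2) :=
    funext fun ac => distOf_margAC p A B C ac.1 ac.2
  have hBC : distOf p (fun ω => (B ω, C ω)) = fun bc : β × γ =>
      ∑ a, distOf p (fun ω => (A ω, B ω, C ω)) (a, bc.1, bc.2) :=
    funext fun bc => distOf_margBC p A B C bc.1 bc.2
  have hC : distOf p C = fun c =>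
      ∑ a, ∑ b, distOf p (fun ω => (A ω, B ω, C ω)) (a, b, c) :=
    funext fun c => distOf_margC p A B C c
  unfold CMI Hent
  rw [hAC, hBC, hC]
  exact entFun_key (fun a b c => distOf p (fun ω => (A ω, B ω, C ω)) (a, b, c)) hr hs

/-- Entropy is invariant under injective relabeling. -/
lemma Hent_comp_inj {Ω α β : Type} [Fintype Ω] [Fintype α] [Fintype β]
    (p : Ω → ℝ) (A : Ω → α) (e : α → β) (he : Function.Injective e) :
    Hent p (fun ω => e (A ω)) = Hent p A := by
  unfold Hent entFun
  rw [neg_inj]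
  have hzero : ∀ b : β, b ∉ Finset.univ.image e → distOf p (fun ω => e (A ω)) b = 0 := by
    intro b hb
    unfold distOf
    refine Finset.sum_eq_zero fun ω _ => ?_
    have : e (A ω) ≠ b := fun h => hb (Finset.mem_image.2 ⟨A ω, Finset.mem_univ _, h⟩)
    simp [this]
  have hsub : ∑ b : β, distOf p (fun ω => e (A ω)) b * Real.logb 2 (distOf p (fun ω => e (A ω)) b)
      = ∑ b ∈ Finset.univ.image e, distOf p (fun ω => e (A ω)) b
          * Real.logb 2 (distOf p (fun ω => e (A ω)) b) := by
    refine (Finset.sum_subset (Finset.subset_univ _) fun b _ hb => ?_).symm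
    rw [hzero b hb]; simp
  rw [hsub, Finset.sum_image (fun a _ a' _ h => he h)]
  refine Finset.sum_congr rfl fun a _ => ?_
  have : distOf p (fun ω => e (A ω)) (e a) = distOf p A a := by
    unfold distOf
    refine Finset.sum_congr rfl fun ω _ => ?_
    simp [he.eq_iff]
  rw [this]

/-- Joint entropy dominates marginal entropy: `H(X,Z) ≥ H(Z)`. -/
lemma Hent_pair_ge {Ω α β : Type} [Fintype Ω] [Fintype α] [Fintype β]
    (p : Ω → ℝ) (hp : IsPMF p) (X : Ω → α) (Z : Ω → β) :
    Hent p Z ≤ Hent p (fun ω => (X ω, Z ω)) := by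
  have h := CMI_nonneg p hp X X Z
  unfold CMI at h
  have hd : Hent p (fun ω => (X ω, X ω, Z ω)) = Hent p (fun ω => (X ω, Z ω)) := by
    have := Hent_comp_inj p (fun ω => (X ω, Z ω)) (fun q => (q.1, q.1, q.2))
      (fun q q' h => by
        simp only [Prod.mk.injEq] at h
        exact Prod.ext h.1 h.2.2)
    exact this
  rw [hd] at h
  linarith

/-- **Inequality from Appendix C.** `I(V;Y2|W) − I(V;Y1|W) ≤ H(Y2|Y1)`. -/
theorem det_region_ineq {Ω A B D1 D2 : Type} [Fintype Ω] [Fintype A] [Fintype B]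
    [Fintype D1] [Fintype D2]
    (p : Ω → ℝ) (hp : IsPMF p)
    (W : Ω → A) (V : Ω → B) (Y1 : Ω → D1) (Y2 : Ω → D2) :
    CMI p V Y2 W - CMI p V Y1 W ≤ CHent p Y2 Y1 := by
  -- h1 : I(V ; Y1 | (Y2, W)) ≥ 0
  have h1 : 0 ≤ Hent p (fun ω => (V ω, Y2 ω, W ω)) + Hent p (fun ω => (Y1 ω, Y2 ω, W ω))
      - Hent p (fun ω => (V ω, Y1 ω, Y2 ω, W ω)) - Hent p (fun ω => (Y2 ω, W ω)) :=
    CMI_nonneg p hp V Y1 (fun ω => (Y2 ω, W ω))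
  -- h3 : I(Y2 ; W | Y1) ≥ 0
  have h3 : 0 ≤ Hent p (fun ω => (Y2 ω, Y1 ω)) + Hent p (fun ω => (W ω, Y1 ω))
      - Hent p (fun ω => (Y2 ω, W ω, Y1 ω)) - Hent p Y1 :=
    CMI_nonneg p hp Y2 W Y1
  -- h2 : H(Y2, (V, Y1, W)) ≥ H(V, Y1, W)
  have h2 : Hent p (fun ω => (V ω, Y1 ω, W ω)) ≤ Hent p (fun ω => (Y2 ω, V ω, Y1 ω, W ω)) :=
    Hent_pair_ge p hp Y2 (fun ω => (V ω, Y1 ω, W ω))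
  -- relabeling equalities
  have e1 : Hent p (fun ω => (Y2 ω, W ω, Y1 ω)) = Hent p (fun ω => (Y1 ω, Y2 ω, W ω)) := by
    have := Hent_comp_inj p (fun ω => (Y1 ω, Y2 ω, W ω)) (fun q => (q.2.1, q.2.2, q.1))
      (fun q q' h => by
        simp only [Prod.mk.injEq] at h
        exact Prod.ext h.2.2 (Prod.ext h.1 h.2.1))
    exact this
  have e2 : Hent p (fun ω => (Y2 ω, V ω, Y1 ω, W ω)) = Hent p (fun ω => (V ω, Y1 ω, Y2 ω, W ω)) := by
    have := Hent_comp_inj p (fun ω => (V ω, Y1 ω, Y2 ω, W ω))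
      (fun q => (q.2.2.1, q.1, q.2.1, q.2.2.2))
      (fun q q' h => by
        simp only [Prod.mk.injEq] at h
        exact Prod.ext h.2.1 (Prod.ext h.2.2.1 (Prod.ext h.1 h.2.2.2)))
    exact this
  have e3 : Hent p (fun ω => (W ω, Y1 ω)) = Hent p (fun ω => (Y1 ω, W ω)) := by
    have := Hent_comp_inj p (fun ω => (Y1 ω, W ω)) (fun q => (q.2, q.1))
      (fun q q' h => by
        simp only [Prod.mk.injEq] at h
        exact Prod.ext h.2 h.1)
    exact this
  unfold CMI CHent
  rw [e1] at h3
  rw [e2] at h2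
  rw [e3] at h3
  linarith
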